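/- Sufficient global optimality conditions: under the assumptions of the previous setup, a point (Ũ,Ṽ,Q̃) is a global minimum of f(U,V,Q) = ℓ(Y,UVᵀ,Q) + λ∑_{i=1}^r θ(U_i,V_i) if (1) 0 ∈ ∂_Q ℓ(Y,ŨṼᵀ,Q̃), (2) Ũ_iᵀ(−(1/λ)∇_X ℓ(Y,ŨṼᵀ,Q̃))Ṽ_i = θ(Ũ_i,Ṽ_i) for all i ∈ [r], and (3) uᵀ(−(1/λ)∇_X ℓ(Y,ŨṼᵀ,Q̃))v ≤ θ(u,v) for all (u,v). -/

import Mathlib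

open Matrix Filter
open scoped ENNReal BigOperators

/-- The matrix factorization regularizer: infimum over all factorizations `X = U * Vᵀ`
(with a variable number `r` of columns) of the sum of `θ` applied to column pairs. -/
noncomputable def Omega {D N : ℕ} (θ : (Fin D → ℝ) → (Fin N → ℝ) → ℝ≥0∞)
    (X : Matrix (Fin D) (Fin N) ℝ) : ℝ≥0∞ :=
  ⨅ (r : ℕ) (U : Matrix (Fin D) (Fin r) ℝ) (V : Matrix (Fin N) (Fin r) ℝ)
    (_ : U * Vᵀ = X), ∑ i : Fin r, θ (fun d => U d i) (fun n => V n i)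

/-- `θ` is a rank-1 regularizer: positively homogeneous of degree 2, `θ(0,0) = 0`
(nonnegativity is automatic in `ℝ≥0∞`), and `θ(uₙ,vₙ) → ∞` whenever `‖uₙvₙᵀ‖_F → ∞`. -/
def IsRankOneReg {D N : ℕ} (θ : (Fin D → ℝ) → (Fin N → ℝ) → ℝ≥0∞) : Prop :=
  (∀ (α : ℝ), 0 ≤ α → ∀ u v, θ (α • u) (α • v) = ENNReal.ofReal (α ^ 2) * θ u v) ∧
  (θ 0 0 = 0) ∧
  (∀ (u : ℕ → Fin D → ℝ) (v : ℕ → Fin N → ℝ),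
    Tendsto (fun k => Real.sqrt (∑ d, ∑ m, (u k d * v k m) ^ 2)) atTop atTop →
    Tendsto (fun k => θ (u k) (v k)) atTop (nhds ⊤))

/-- The Frobenius (trace) inner product on matrices. -/
noncomputable def frobInner {D N : ℕ} (A B : Matrix (Fin D) (Fin N) ℝ) : ℝ :=
  ∑ d, ∑ n, A d n * B d n


open scoped Topology

private lemma coe_toReal' (x : ℝ≥0∞) (hx : x ≠ ⊤) : ((x : EReal)) = ((x.toReal : ℝ) : EReal) := by
  conv_lhs => rw [← ENNReal.ofReal_toReal hx]
  rw [EReal.coe_ennreal_ofReal, max_eq_left ENNReal.toReal_nonneg]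


private lemma sum_vecMulVec {D N k : ℕ} (A : Matrix (Fin D) (Fin k) ℝ) (B : Matrix (Fin N) (Fin k) ℝ) :
    A * Bᵀ = ∑ i : Fin k, vecMulVec (fun d => A d i) (fun n => B n i) := by
  ext d n
  simp [Matrix.mul_apply, vecMulVec_apply, Matrix.transpose_apply, Matrix.sum_apply]


private lemma grad_ineq {D N P : ℕ}
    (ℓ : (Fin D → Fin N → ℝ) → (Fin P → ℝ) → ℝ)
    (hconv : ConvexOn ℝ Set.univ (fun p : (Fin D → Fin N → ℝ) × (Fin P → ℝ) => ℓ p.1 p.2))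
    (Xt : Fin D → Fin N → ℝ) (Qt : Fin P → ℝ)
    (hdiff : Differentiable ℝ (fun X => ℓ X Qt))
    (h1 : ∀ Q, ℓ Xt Qt ≤ ℓ Xt Q)
    (X : Fin D → Fin N → ℝ) (Q : Fin P → ℝ) :
    ℓ Xt Qt + (fderiv ℝ (fun X => ℓ X Qt) Xt) (X - Xt) ≤ ℓ X Q := by
  set d : Fin D → Fin N → ℝ := X - Xt with hd
  set G := fderiv ℝ (fun X => ℓ X Qt) Xt with hG
  set h : ℝ → ℝ := fun t => ℓ (Xt - t • d) Qt with hh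
  have hderiv : HasDerivAt h (-(G d)) 0 := by
    have hline : HasDerivAt (fun t : ℝ => Xt - t • d) (-d) 0 := by
      simpa using ((hasDerivAt_id (0 : ℝ)).smul_const d).const_sub Xt
    have h2 := ((hdiff (Xt - (0:ℝ) • d)).hasFDerivAt).comp_hasDerivAt 0 hline
    simpa [hh, hG, map_neg, Function.comp_def] using h2
  have h00 : h 0 = ℓ Xt Qt := by simp [hh]
  have key : ∀ t ∈ Set.Ioc (0:ℝ) 1, -slope h 0 t ≤ ℓ X Q - ℓ Xt Qt := by
    intro t ht
    obtain ⟨ht0, ht1⟩ := ht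
    have e1 : (1 - t) • ((Xt, Qt) : (Fin D → Fin N → ℝ) × (Fin P → ℝ)) + t • (X, Q)
        = (Xt + t • d, Qt + t • (Q - Qt)) := by
      apply Prod.ext <;> simp [hd] <;> module
    have ha := hconv.2 (Set.mem_univ ((Xt, Qt) : (Fin D → Fin N → ℝ) × (Fin P → ℝ)))
      (Set.mem_univ (X, Q)) (by linarith : (0:ℝ) ≤ 1 - t) ht0.le (by ring)
    rw [e1] at ha
    have e2 : ((1:ℝ)/2) • ((Xt + t • d, Qt + t • (Q - Qt)) : (Fin D → Fin N → ℝ) × (Fin P → ℝ))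
        + ((1:ℝ)/2) • (Xt - t • d, Qt) = (Xt, Qt + (t/2) • (Q - Qt)) := by
      apply Prod.ext <;> simp <;> module
    have hb := hconv.2 (Set.mem_univ ((Xt + t • d, Qt + t • (Q - Qt)) :
        (Fin D → Fin N → ℝ) × (Fin P → ℝ)))
      (Set.mem_univ (Xt - t • d, Qt)) (by norm_num : (0:ℝ) ≤ 1/2) (by norm_num : (0:ℝ) ≤ 1/2)
      (by norm_num)
    rw [e2] at hb
    have hc := h1 (Qt + (t/2) • (Q - Qt))
    have hslope : slope h 0 t = (h t - h 0) / t := by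
      rw [slope_def_field]; ring_nf
    simp only [smul_eq_mul] at ha hb
    rw [hslope, h00, neg_le, le_div_iff₀ ht0]
    simp only [hh]
    linarith
  have hsl : Tendsto (fun t => -slope h 0 t) (𝓝[>] (0:ℝ)) (𝓝 (G d)) := by
    have h1' := hasDerivAt_iff_tendsto_slope.mp hderiv
    have h2' := h1'.mono_left (nhdsWithin_mono _ (show Set.Ioi (0:ℝ) ⊆ {0}ᶜ from fun x hx => ne_of_gt hx))
    simpa using h2'.neg
  have hfin : G d ≤ ℓ X Q - ℓ Xt Qt := by
    refine le_of_tendsto hsl ?_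
    filter_upwards [Ioc_mem_nhdsGT_of_mem (by norm_num : (0:ℝ) ∈ Set.Ico (0:ℝ) 1)] with t ht
    exact key t ht
  linarith


/-- Sufficient conditions for global optimality of the factorized objective:
(1) `0 ∈ ∂_Q ℓ`, (2) per-column alignment `Ũᵢᵀ(−(1/λ)∇_Xℓ)Ṽᵢ = θ(Ũᵢ,Ṽᵢ)`, and
(3) the polar inequality `uᵀ(−(1/λ)∇_Xℓ)v ≤ θ(u,v)` for all `(u,v)`. -/
theorem sufficient_global_optimality {D N P r : ℕ}
    (θ : (Fin D → ℝ) → (Fin N → ℝ) → ℝ≥0∞) (hθ : IsRankOneReg θ)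
    (ℓ : (Fin D → Fin N → ℝ) → (Fin P → ℝ) → ℝ)
    (hconv : ConvexOn ℝ Set.univ (fun p : (Fin D → Fin N → ℝ) × (Fin P → ℝ) => ℓ p.1 p.2))
    (hdiff : ∀ Q : Fin P → ℝ, Differentiable ℝ (fun X : Fin D → Fin N → ℝ => ℓ X Q))
    (lam : ℝ) (hlam : 0 < lam)
    (Ut : Matrix (Fin D) (Fin r) ℝ) (Vt : Matrix (Fin N) (Fin r) ℝ) (Qt : Fin P → ℝ)
    (h1 : ∀ Q : Fin P → ℝ, ℓ (Ut * Vtᵀ) Qt ≤ ℓ (Ut * Vtᵀ) Q)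
    (h2 : ∀ i : Fin r,
      (((-(1 / lam)) * fderiv ℝ (fun X : Fin D → Fin N → ℝ => ℓ X Qt) (Ut * Vtᵀ)
          (vecMulVec (fun d => Ut d i) (fun n => Vt n i)) : ℝ) : EReal)
        = (θ (fun d => Ut d i) (fun n => Vt n i) : EReal))
    (h3 : ∀ (u : Fin D → ℝ) (v : Fin N → ℝ),
      (((-(1 / lam)) * fderiv ℝ (fun X : Fin D → Fin N → ℝ => ℓ X Qt) (Ut * Vtᵀ)
          (vecMulVec u v) : ℝ) : EReal) ≤ (θ u v : EReal)) :
    ∀ (r' : ℕ) (U : Matrix (Fin D) (Fin r') ℝ) (V : Matrix (Fin N) (Fin r') ℝ) (Q : Fin P → ℝ),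
      ((ℓ (Ut * Vtᵀ) Qt : ℝ) : EReal) +
          ((ENNReal.ofReal lam * ∑ i : Fin r, θ (fun d => Ut d i) (fun n => Vt n i) : ℝ≥0∞) : EReal)
        ≤ ((ℓ (U * Vᵀ) Q : ℝ) : EReal) +
          ((ENNReal.ofReal lam * ∑ i : Fin r', θ (fun d => U d i) (fun n => V n i) : ℝ≥0∞) : EReal) := by
  have grad_ineq := grad_ineq ℓ hconv (Ut * Vtᵀ) Qt (hdiff Qt) h1
  intro r' U V Q
  set G := fderiv ℝ (fun X : Fin D → Fin N → ℝ => ℓ X Qt) (Ut * Vtᵀ) with hG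
  by_cases hS : (∑ i : Fin r', θ (fun d => U d i) (fun n => V n i)) = ⊤
  · have htop : ENNReal.ofReal lam * ∑ i : Fin r', θ (fun d => U d i) (fun n => V n i) = ⊤ := by
      rw [hS, ENNReal.mul_top (by positivity)]
    rw [htop, EReal.coe_ennreal_top, EReal.coe_add_top]
    exact le_top
  · -- finiteness
    have hfin : ∀ i : Fin r', θ (fun d => U d i) (fun n => V n i) ≠ ⊤ :=
      fun i => ne_top_of_le_ne_top hS (Finset.single_le_sum (f := fun i : Fin r' => θ (fun d => U d i) (fun n => V n i)) (fun j _ => zero_le) (Finset.mem_univ i))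
    have hfint : ∀ i : Fin r, θ (fun d => Ut d i) (fun n => Vt n i) ≠ ⊤ := by
      intro i hi
      have := h2 i
      rw [hi, EReal.coe_ennreal_top] at this
      exact EReal.coe_ne_top _ this
    have hSt : (∑ i : Fin r, θ (fun d => Ut d i) (fun n => Vt n i)) ≠ ⊤ :=
      (ENNReal.sum_lt_top.mpr (fun i _ => (hfint i).lt_top)).ne
    -- toReal values of tilde thetas
    have hval : ∀ i : Fin r, (θ (fun d => Ut d i) (fun n => Vt n i)).toReal
        = -(1 / lam) * G (vecMulVec (fun d => Ut d i) (fun n => Vt n i)) := by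
      intro i
      have := (h2 i).symm
      rw [coe_toReal' _ (hfint i)] at this
      exact_mod_cast this
    have hvge : ∀ i : Fin r', -(1 / lam) * G (vecMulVec (fun d => U d i) (fun n => V n i))
        ≤ (θ (fun d => U d i) (fun n => V n i)).toReal := by
      intro i
      have := h3 (fun d => U d i) (fun n => V n i)
      rw [coe_toReal' _ (hfin i)] at this
      exact_mod_cast this
    -- reduce to reals
    have hm1 : ENNReal.ofReal lam * (∑ i : Fin r, θ (fun d => Ut d i) (fun n => Vt n i)) ≠ ⊤ :=
      ENNReal.mul_ne_top ENNReal.ofReal_ne_top hSt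
    have hm2 : ENNReal.ofReal lam * (∑ i : Fin r', θ (fun d => U d i) (fun n => V n i)) ≠ ⊤ :=
      ENNReal.mul_ne_top ENNReal.ofReal_ne_top hS
    rw [coe_toReal' _ hm1, coe_toReal' _ hm2, ← EReal.coe_add, ← EReal.coe_add,
      EReal.coe_le_coe_iff, ENNReal.toReal_mul, ENNReal.toReal_mul,
      ENNReal.toReal_ofReal hlam.le, ENNReal.toReal_sum (fun i _ => hfint i),
      ENNReal.toReal_sum (fun i _ => hfin i)]
    -- key identities
    have hsum1 : lam * ∑ i : Fin r, (θ (fun d => Ut d i) (fun n => Vt n i)).toReal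
        = -(G (Ut * Vtᵀ)) := by
      rw [Finset.mul_sum]
      have : ∀ i : Fin r, lam * (θ (fun d => Ut d i) (fun n => Vt n i)).toReal
          = -(G (vecMulVec (fun d => Ut d i) (fun n => Vt n i))) := by
        intro i; rw [hval i]; field_simp
      rw [Finset.sum_congr rfl (fun i _ => this i), sum_vecMulVec Ut Vt,
        Finset.sum_neg_distrib]
      congr 1; exact (map_sum G _ _).symm
    have hsum2 : -(G (U * Vᵀ)) ≤ lam * ∑ i : Fin r', (θ (fun d => U d i) (fun n => V n i)).toReal := by
      rw [Finset.mul_sum]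
      have hstep : ∀ i : Fin r', -(G (vecMulVec (fun d => U d i) (fun n => V n i)))
          ≤ lam * (θ (fun d => U d i) (fun n => V n i)).toReal := by
        intro i
        have := mul_le_mul_of_nonneg_left (hvge i) hlam.le
        calc -(G (vecMulVec (fun d => U d i) (fun n => V n i)))
            = lam * (-(1 / lam) * G (vecMulVec (fun d => U d i) (fun n => V n i))) := by
              field_simp
          _ ≤ _ := this
      calc -(G (U * Vᵀ)) = ∑ i : Fin r', -(G (vecMulVec (fun d => U d i) (fun n => V n i))) := by
            rw [sum_vecMulVec U V, Finset.sum_neg_distrib]; congr 1; exact map_sum G _ _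
        _ ≤ _ := Finset.sum_le_sum (fun i _ => hstep i)
    have hgrad := grad_ineq (U * Vᵀ) Q
    erw [map_sub G (U * Vᵀ) (Ut * Vtᵀ)] at hgrad
    calc ℓ (Ut * Vtᵀ) Qt + lam * ∑ i : Fin r, (θ (fun d => Ut d i) (fun n => Vt n i)).toReal
        = ℓ (Ut * Vtᵀ) Qt + (G (U * Vᵀ) - G (Ut * Vtᵀ)) + -G (U * Vᵀ) := by rw [hsum1]; ring
      _ ≤ ℓ (U * Vᵀ) Q + lam * ∑ i : Fin r', (θ (fun d => U d i) (fun n => V n i)).toReal :=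
        add_le_add hgrad hsum2
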